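/- Let X be a nonempty compact Hausdorff topological space and let ζ : C(X, ℝ) → ℝ be a state, i.e., a linear functional with ζ(f) ≥ 0 whenever f ≥ 0 pointwise and ζ(1) = 1. Then ζ is an extreme point of the convex set of all states on C(X, ℝ) if and only if ζ is multiplicative, i.e., ζ(f · g) = ζ(f) · ζ(g) for all f, g ∈ C(X, ℝ). -/

import Mathlib

lemma state_cauchy_schwarz (X : Type*) [TopologicalSpace X] (ξ : C(X, ℝ) →ₗ[ℝ] ℝ)
    (hpos : ∀ f : C(X, ℝ), 0 ≤ f → 0 ≤ ξ f) (f g : C(X, ℝ)) :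
    (ξ (f * g))^2 ≤ ξ (f * f) * ξ (g * g) := by
  have key : ∀ t : ℝ, 0 ≤ ξ (f*f) * (t * t) + (2 * ξ (f*g)) * t + ξ (g*g) := by
    intro t
    have h0 : (0:C(X,ℝ)) ≤ (t • f + g) * (t • f + g) := by
      rw [ContinuousMap.le_def]; intro x
      simpa using mul_self_nonneg (t * f x + g x)
    have h1 := hpos _ h0
    have expand : (t • f + g) * (t • f + g)
        = (t^2) • (f*f) + (2*t) • (f*g) + (g*g) := by
      ext x; simp; ring
    rw [expand] at h1
    have h2 : ξ ((t^2) • (f*f) + (2*t) • (f*g) + (g*g))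
        = ξ (f*f) * (t * t) + (2 * ξ (f*g)) * t + ξ (g*g) := by
      simp [map_add, map_smul]; ring
    rw [h2] at h1; linarith
  have hd := discrim_le_zero key
  rw [discrim] at hd
  nlinarith [hd]

/-- monotonicity of a positive functional -/
lemma state_mono (X : Type*) [TopologicalSpace X] (ξ : C(X, ℝ) →ₗ[ℝ] ℝ)
    (hpos : ∀ f : C(X, ℝ), 0 ≤ f → 0 ≤ ξ f) {f g : C(X, ℝ)} (h : f ≤ g) :
    ξ f ≤ ξ g := by
  have := hpos (g - f) (by simpa using h)
  have h2 : ξ (g - f) = ξ g - ξ f := map_sub ξ g f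
  linarith [h2 ▸ this]

/-- A state on `C(X, ℝ)` (a positive linear functional with `ζ(1) = 1`), for `X` a nonempty
compact Hausdorff space, is an extreme point of the convex set of states iff it is
multiplicative. -/
theorem extreme_state_iff_multiplicative
    (X : Type*) [TopologicalSpace X] [CompactSpace X] [T2Space X] [Nonempty X]
    (S : Set (C(X, ℝ) →ₗ[ℝ] ℝ))
    (hS : S = {ζ | (∀ f : C(X, ℝ), 0 ≤ f → 0 ≤ ζ f) ∧ ζ 1 = 1})
    (ζ : C(X, ℝ) →ₗ[ℝ] ℝ) (hζ : ζ ∈ S) :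
    ζ ∈ Set.extremePoints ℝ S ↔ ∀ f g : C(X, ℝ), ζ (f * g) = ζ f * ζ g := by
  subst hS
  obtain ⟨hpos, hone⟩ := hζ
  constructor
  · -- extreme → multiplicative
    intro hext
    -- Step 1: if ζ h = 0 and 0 ≤ h ≤ 1 then ζ (f * h) = 0
    have zero_case : ∀ h : C(X, ℝ), 0 ≤ h → h ≤ 1 → ζ h = 0 →
        ∀ f : C(X, ℝ), ζ (f * h) = 0 := by
      intro h h0 h1 hz f
      have hh : ζ (h * h) = 0 := by
        have hle : h * h ≤ h := by
          rw [ContinuousMap.le_def]; intro x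
          have ha := ContinuousMap.le_def.mp h0 x
          have hb := ContinuousMap.le_def.mp h1 x
          simp only [ContinuousMap.zero_apply] at ha
          simp only [ContinuousMap.one_apply] at hb
          simp only [ContinuousMap.mul_apply]
          nlinarith
        have h2 : (0:C(X,ℝ)) ≤ h * h := by
          rw [ContinuousMap.le_def]; intro x
          simpa using mul_self_nonneg (h x)
        have := state_mono X ζ hpos hle
        have := hpos _ h2
        linarith
      have := state_cauchy_schwarz X ζ hpos f h
      rw [hh] at this
      nlinarith [this, sq_nonneg (ζ (f * h))]
    -- Step 2: for 0 ≤ h ≤ 1, ζ (f * h) = ζ f * ζ h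
    have key : ∀ h : C(X, ℝ), 0 ≤ h → h ≤ 1 →
        ∀ f : C(X, ℝ), ζ (f * h) = ζ f * ζ h := by
      intro h h0 h1 f
      have hz0 : 0 ≤ ζ h := hpos h h0
      have hz1 : ζ h ≤ 1 := by
        have := state_mono X ζ hpos h1
        rwa [hone] at this
      rcases eq_or_lt_of_le hz0 with hc0 | hc0
      · rw [zero_case h h0 h1 hc0.symm f, ← hc0]; ring
      rcases eq_or_lt_of_le hz1 with hc1 | hc1
      · -- ζ h = 1 : apply zero case to 1 - h
        have h0' : (0:C(X,ℝ)) ≤ 1 - h := by simpa using h1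
        have h1' : (1:C(X,ℝ)) - h ≤ 1 := by
          rw [ContinuousMap.le_def]; intro x
          have ha := ContinuousMap.le_def.mp h0 x
          simp only [ContinuousMap.zero_apply] at ha
          simp only [ContinuousMap.sub_apply, ContinuousMap.one_apply]
          linarith
        have hz : ζ (1 - h) = 0 := by rw [map_sub, hone, hc1]; ring
        have := zero_case (1 - h) h0' h1' hz f
        have hexp : f * (1 - h) = f - f * h := by ring
        rw [hexp, map_sub] at this
        rw [hc1]; linarith
      · -- 0 < ζ h < 1 : extreme point argument
        set a := ζ h with ha
        set ζ₁ : C(X, ℝ) →ₗ[ℝ] ℝ := a⁻¹ • (ζ ∘ₗ LinearMap.mulRight ℝ h) with hζ₁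
        set ζ₂ : C(X, ℝ) →ₗ[ℝ] ℝ := (1 - a)⁻¹ • (ζ ∘ₗ LinearMap.mulRight ℝ (1 - h)) with hζ₂
        have hane : a ≠ 0 := ne_of_gt hc0
        have hbne : 1 - a ≠ 0 := by linarith [hc1]
        have hmem₁ : ζ₁ ∈ {ζ : C(X, ℝ) →ₗ[ℝ] ℝ |
            (∀ f : C(X, ℝ), 0 ≤ f → 0 ≤ ζ f) ∧ ζ 1 = 1} := by
          constructor
          · intro g hg
            have hgh : (0:C(X,ℝ)) ≤ g * h := by
              rw [ContinuousMap.le_def]; intro x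
              exact mul_nonneg (ContinuousMap.le_def.mp hg x) (ContinuousMap.le_def.mp h0 x)
            have hp := hpos _ hgh
            simp only [hζ₁, LinearMap.smul_apply, LinearMap.comp_apply,
              LinearMap.mulRight_apply, smul_eq_mul]
            exact mul_nonneg (inv_nonneg.mpr hc0.le) hp
          · simp only [hζ₁, LinearMap.smul_apply, LinearMap.comp_apply,
              LinearMap.mulRight_apply, smul_eq_mul, one_mul]
            field_simp
            exact ha.symm
        have hmem₂ : ζ₂ ∈ {ζ : C(X, ℝ) →ₗ[ℝ] ℝ |
            (∀ f : C(X, ℝ), 0 ≤ f → 0 ≤ ζ f) ∧ ζ 1 = 1} := by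
          constructor
          · intro g hg
            have hgh : (0:C(X,ℝ)) ≤ g * (1 - h) := by
              rw [ContinuousMap.le_def]; intro x
              have := ContinuousMap.le_def.mp h1 x
              have := ContinuousMap.le_def.mp hg x
              simp only [ContinuousMap.mul_apply, ContinuousMap.sub_apply,
                ContinuousMap.one_apply, ContinuousMap.zero_apply] at *
              nlinarith
            have hp := hpos _ hgh
            have hb0 : 0 < 1 - a := by linarith
            simp only [hζ₂, LinearMap.smul_apply, LinearMap.comp_apply,
              LinearMap.mulRight_apply, smul_eq_mul]
            exact mul_nonneg (inv_nonneg.mpr hb0.le) hp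
          · have : ζ ((1:C(X,ℝ)) * (1 - h)) = 1 - a := by
              rw [one_mul, map_sub, hone, ha]
            simp only [hζ₂, LinearMap.smul_apply, LinearMap.comp_apply,
              LinearMap.mulRight_apply, smul_eq_mul, this]
            field_simp
        have hseg : ζ ∈ openSegment ℝ ζ₁ ζ₂ := by
          refine ⟨a, 1 - a, hc0, by linarith, by ring, ?_⟩
          ext g
          simp only [LinearMap.add_apply, LinearMap.smul_apply, hζ₁, hζ₂,
            LinearMap.comp_apply, LinearMap.mulRight_apply, smul_eq_mul]
          have e1 : a * (a⁻¹ * ζ (g * h)) = ζ (g * h) := by field_simp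
          have e2 : (1 - a) * ((1 - a)⁻¹ * ζ (g * (1 - h))) = ζ (g * (1 - h)) := by field_simp
          rw [e1, e2]
          have : g * (1 - h) = g - g * h := by ring
          rw [this, map_sub]; ring
        have heq₁ := hext.2 hmem₁ hmem₂ hseg
        have key2 : a⁻¹ * ζ (f * h) = ζ f := by
          have := LinearMap.congr_fun heq₁ f
          simpa [hζ₁, LinearMap.smul_apply, LinearMap.comp_apply,
            LinearMap.mulRight_apply, smul_eq_mul] using this
        field_simp at key2
        linarith [key2]
    -- Step 3: general case by affine rescaling
    intro f g
    set c : ℝ := ‖g‖ + 1 with hc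
    have hcpos : 0 < c := by positivity
    obtain ⟨h, hh⟩ : ∃ h : C(X, ℝ), h = (2 * c)⁻¹ • (g + c • 1) := ⟨_, rfl⟩
    have h0 : (0:C(X,ℝ)) ≤ h := by
      rw [ContinuousMap.le_def]; intro x
      have hb : |g x| ≤ ‖g‖ := by
        simpa using ContinuousMap.norm_coe_le_norm g x
      rw [abs_le] at hb
      simp only [hh, ContinuousMap.smul_apply, ContinuousMap.add_apply,
        ContinuousMap.one_apply, ContinuousMap.zero_apply, smul_eq_mul]
      have hgx : 0 ≤ g x + c * 1 := by simp only [hc]; linarith [hb.1]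
      exact mul_nonneg (by positivity) hgx
    have h1 : h ≤ 1 := by
      rw [ContinuousMap.le_def]; intro x
      have hb : |g x| ≤ ‖g‖ := by
        simpa using ContinuousMap.norm_coe_le_norm g x
      rw [abs_le] at hb
      simp only [hh, ContinuousMap.smul_apply, ContinuousMap.add_apply,
        ContinuousMap.one_apply, smul_eq_mul]
      rw [inv_mul_le_iff₀ (by positivity)]
      simp only [hc]; linarith [hb.2]
    have hgrep : g = (2 * c) • h - c • (1:C(X,ℝ)) := by
      rw [hh, smul_smul]
      rw [mul_inv_cancel₀ (by positivity)]
      ext x; simp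
    have hfg : f * g = (2 * c) • (f * h) - c • f := by
      rw [hgrep]; ext x; simp; ring
    have hζg : ζ g = 2 * c * ζ h - c := by
      have e : ζ ((2 * c) • h - c • (1:C(X,ℝ))) = 2 * c * ζ h - c := by
        rw [map_sub, map_smul, map_smul, hone, smul_eq_mul, smul_eq_mul, mul_one]
      rw [← e, ← hgrep]
    rw [hfg, map_sub, map_smul, map_smul, key h h0 h1 f, hζg,
      smul_eq_mul, smul_eq_mul]
    ring
  · -- multiplicative → extreme
    intro hmul
    refine ⟨⟨hpos, hone⟩, ?_⟩
    intro ζ₁ hmem₁ ζ₂ hmem₂ hseg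
    obtain ⟨a, b, ha, hb, hab, heq⟩ := hseg
    have hptwise : ∀ f : C(X, ℝ), ζ₁ f = ζ₂ f := by
      intro f
      have e1 : a * ζ₁ f + b * ζ₂ f = ζ f := by
        have := LinearMap.congr_fun heq f
        simpa [LinearMap.add_apply, LinearMap.smul_apply, smul_eq_mul] using this
      have e2 : a * ζ₁ (f * f) + b * ζ₂ (f * f) = ζ (f * f) := by
        have := LinearMap.congr_fun heq (f * f)
        simpa [LinearMap.add_apply, LinearMap.smul_apply, smul_eq_mul] using this
      have cs1 : (ζ₁ f)^2 ≤ ζ₁ (f * f) := by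
        have := state_cauchy_schwarz X ζ₁ hmem₁.1 1 f
        simpa [hmem₁.2] using this
      have cs2 : (ζ₂ f)^2 ≤ ζ₂ (f * f) := by
        have := state_cauchy_schwarz X ζ₂ hmem₂.1 1 f
        simpa [hmem₂.2] using this
      have hm : ζ (f * f) = ζ f * ζ f := hmul f f
      by_contra hne
      have hne' : ζ₁ f - ζ₂ f ≠ 0 := sub_ne_zero.mpr hne
      have h4 : 0 < (ζ₁ f - ζ₂ f)^2 :=
        lt_of_le_of_ne (sq_nonneg _) (Ne.symm (pow_ne_zero _ hne'))
      have e3 : ζ f * ζ f = (a * ζ₁ f + b * ζ₂ f) * (a * ζ₁ f + b * ζ₂ f) := by rw [e1]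
      nlinarith [mul_pos (mul_pos ha hb) h4,
        mul_le_mul_of_nonneg_left cs1 ha.le, mul_le_mul_of_nonneg_left cs2 hb.le]
    have h12 : ζ₁ = ζ₂ := LinearMap.ext hptwise
    have hζ1 : ζ₁ = ζ := by
      rw [← heq, h12]
      ext f
      simp only [LinearMap.add_apply, LinearMap.smul_apply, smul_eq_mul]
      rw [← add_mul, hab, one_mul]
    exact hζ1
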